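/- Fix x, y ∈ [−1,1] and for n ≥ 1 set D_{n+1}(x,y) = I_{n+1}(x)·I_n(y) − I_n(x)·I_{n+1}(y), where I_n(x) = ∫_{−1}^x P_n(z) dz. Then for every N ∈ ℕ, (x−y)·Σ_{n=1}^N (2n+1)·I_n(x)·I_n(y) = N·D_{N+1}(x,y) + 2·Σ_{n=1}^N D_{n+1}(x,y). -/
import Mathlib


open Finset

open Polynomial

noncomputable def legQ (n : ℕ) : ℝ[X] := (X ^ 2 - 1) ^ n

noncomputable def legG (n : ℕ) : ℝ[X] := derivative^[n] (legQ (n + 1))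

lemma itD_add (k : ℕ) (p q : ℝ[X]) :
    derivative^[k] (p + q) = derivative^[k] p + derivative^[k] q := by
  induction k generalizing p q with
  | zero => rfl
  | succ k ih => simp [Function.iterate_succ_apply, ih]

-- Leibniz: shift-by-one for X * p
lemma LX1 (j : ℕ) (p : ℝ[X]) :
    derivative^[j + 1] (X * p)
      = X * derivative^[j + 1] p + ((j : ℝ[X]) + 1) * derivative^[j] p := by
  induction j generalizing p with
  | zero => simp [derivative_mul]; ring
  | succ k ih =>
    have h1 : derivative (X * p) = X * derivative p + p := by
      rw [derivative_mul]; simp; ring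
    calc derivative^[k + 1 + 1] (X * p)
        = derivative^[k + 1] (derivative (X * p)) := Function.iterate_succ_apply _ _ _
      _ = derivative^[k + 1] (X * derivative p) + derivative^[k + 1] p := by
          rw [h1, itD_add]
      _ = X * derivative^[k + 1] (derivative p) + ((k : ℝ[X]) + 1) * derivative^[k] (derivative p)
            + derivative^[k + 1] p := by rw [ih]
      _ = _ := by
          rw [← Function.iterate_succ_apply, ← Function.iterate_succ_apply]
          push_cast
          ring

-- Leibniz: shift-by-two for (X^2-1) * p
lemma LQ2 (j : ℕ) (p : ℝ[X]) :
    derivative^[j + 2] ((X ^ 2 - 1) * p)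
      = (X ^ 2 - 1) * derivative^[j + 2] p
        + 2 * ((j : ℝ[X]) + 2) * (X * derivative^[j + 1] p)
        + ((j : ℝ[X]) + 2) * ((j : ℝ[X]) + 1) * derivative^[j] p := by
  have h1 : ∀ q : ℝ[X], derivative ((X ^ 2 - 1) * q)
      = (X ^ 2 - 1) * derivative q + (X * q + X * q) := by
    intro q; rw [derivative_mul]; simp [derivative_mul, map_ofNat]; ring
  induction j generalizing p with
  | zero =>
    show derivative (derivative ((X ^ 2 - 1) * p)) = _
    rw [h1, derivative_add, h1, derivative_add, derivative_mul]
    simp [Function.iterate_succ_apply', derivative_mul, map_ofNat]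
    ring
  | succ k ih =>
    calc derivative^[k + 1 + 2] ((X ^ 2 - 1) * p)
        = derivative^[k + 2] (derivative ((X ^ 2 - 1) * p)) :=
          Function.iterate_succ_apply _ _ _
      _ = derivative^[k + 2] ((X ^ 2 - 1) * derivative p)
            + (derivative^[k + 2] (X * p) + derivative^[k + 2] (X * p)) := by
          rw [h1, itD_add, itD_add]
      _ = _ := by
          rw [ih, LX1 (k + 1) p]
          rw [← Function.iterate_succ_apply, ← Function.iterate_succ_apply,
            ← Function.iterate_succ_apply]
          push_cast
          ring

lemma Qsucc (n : ℕ) : legQ (n + 1) = (X ^ 2 - 1) * legQ n := by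
  unfold legQ; rw [pow_succ]; ring

lemma dQ (n : ℕ) : derivative (legQ (n + 1)) = ((2 * (n + 1) : ℕ) : ℝ[X]) * (X * legQ n) := by
  unfold legQ
  rw [derivative_pow]
  simp [map_ofNat]
  push_cast
  ring

lemma EQpoly (n : ℕ) :
    (X ^ 2 - 1 : ℝ[X]) * derivative (legQ n) = ((2 * n : ℕ) : ℝ[X]) * (X * legQ n) := by
  cases n with
  | zero => simp [legQ]
  | succ m =>
    rw [dQ, Qsucc]
    push_cast
    ring

lemma Gsucc (k : ℕ) :
    legG (k + 2) = ((2 * (k + 3) : ℕ) : ℝ[X])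
      * (X * legG (k + 1) + ((k : ℝ[X]) + 1) * derivative^[k] (legQ (k + 2))) := by
  have h : legG (k + 2) = derivative^[k + 1 + 1] (legQ (k + 2 + 1)) := rfl
  rw [h, Function.iterate_succ_apply, dQ, iterate_derivative_natCast_mul, LX1 k]
  rfl

-- (X^2-1) * G (k+3) = 4 X D^[k+2] Q (k+4) + (k+2)(k+7) D^[k+1] Q (k+4)
lemma rel1 (k : ℕ) :
    (X ^ 2 - 1 : ℝ[X]) * legG (k + 3)
      = 4 * (X * derivative^[k + 2] (legQ (k + 4)))
        + ((k : ℝ[X]) + 2) * ((k : ℝ[X]) + 7) * derivative^[k + 1] (legQ (k + 4)) := by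
  have h := congrArg (derivative^[k + 2]) (EQpoly (k + 4))
  rw [LQ2 k, iterate_derivative_natCast_mul, LX1 (k + 1)] at h
  rw [← Function.iterate_succ_apply, ← Function.iterate_succ_apply,
    ← Function.iterate_succ_apply] at h
  have hG : derivative^[k + 2 + 1] (legQ (k + 4)) = legG (k + 3) := rfl
  rw [hG] at h
  push_cast at h ⊢
  linear_combination h

lemma starP : ∀ k : ℕ, X * legG (k + 1)
    = ((k : ℝ[X]) + 4) * derivative^[k] (legQ (k + 2)) + 2 * ((k : ℝ[X]) + 2) * legG k
  | 0 => by
    simp only [legG, legQ]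
    simp [derivative_pow, derivative_mul, map_ofNat]
    ring
  | 1 => by
    simp only [legG, legQ]
    simp [Function.iterate_succ_apply', derivative_pow, derivative_mul, map_ofNat]
    ring
  | 2 => by
    simp only [legG, legQ]
    simp [Function.iterate_succ_apply', derivative_pow, derivative_mul, map_ofNat]
    ring
  | (j + 3) => by
    have hG := Gsucc (j + 2)
    have hH : derivative^[j + 3] (legQ (j + 5))
        = (X ^ 2 - 1) * legG (j + 3)
          + 2 * ((j : ℝ[X]) + 3) * (X * derivative^[j + 2] (legQ (j + 4)))
          + ((j : ℝ[X]) + 3) * ((j : ℝ[X]) + 2) * derivative^[j + 1] (legQ (j + 4)) := by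
      have e : legQ (j + 5) = (X ^ 2 - 1) * legQ (j + 4) := Qsucc (j + 4)
      rw [e, LQ2 (j + 1)]
      have hg : derivative^[j + 1 + 2] (legQ (j + 4)) = legG (j + 3) := rfl
      rw [hg]
      push_cast
      ring
    have hr := rel1 j
    simp only [show j + 2 + 2 = j + 4 from rfl, show j + 2 + 1 = j + 3 from rfl,
      show j + 3 + 1 = j + 4 from rfl, show j + 2 + 3 = j + 5 from rfl] at hG ⊢
    push_cast at hG hH hr ⊢
    linear_combination X * hG - ((j : ℝ[X]) + 7) * hH + ((j : ℝ[X]) + 3) * hr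

lemma RecP (k : ℕ) :
    2 * ((k : ℝ[X]) + 3) * (2 * (k : ℝ[X]) + 5) * (X * legG (k + 1))
      = ((k : ℝ[X]) + 4) * legG (k + 2)
        + 4 * ((k : ℝ[X]) + 1) * ((k : ℝ[X]) + 2) * ((k : ℝ[X]) + 3) * legG k := by
  have hG := Gsucc k
  have hs := starP k
  push_cast at hG hs ⊢
  linear_combination (-((k : ℝ[X]) + 4)) * hG + 2 * ((k : ℝ[X]) + 1) * ((k : ℝ[X]) + 3) * hs

/-- The Legendre polynomial of degree `n` on `[-1,1]`, via Rodrigues' formula. -/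
noncomputable def legP (n : ℕ) (x : ℝ) : ℝ :=
  (1 / (2 ^ n * n.factorial)) * iteratedDeriv n (fun y : ℝ => (y ^ 2 - 1) ^ n) x

/-- The integral `I_n(x) = ∫_{-1}^x P_n(z) dz` of the Legendre polynomial. -/
noncomputable def legIR (n : ℕ) (x : ℝ) : ℝ := ∫ z in (-1 : ℝ)..x, legP n z

/-- `D_{n+1}(x,y) = I_{n+1}(x) I_n(y) - I_n(x) I_{n+1}(y)`, here as a function of `n`. -/
noncomputable def legDR (n : ℕ) (x y : ℝ) : ℝ :=
  legIR (n + 1) x * legIR n y - legIR n x * legIR (n + 1) y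

lemma eval_iter (k : ℕ) (p : ℝ[X]) (x : ℝ) :
    iteratedDeriv k (fun y => eval y p) x = eval x (derivative^[k] p) := by
  induction k generalizing p with
  | zero => simp
  | succ k ih =>
    rw [iteratedDeriv_succ']
    have h : deriv (fun y : ℝ => eval y p) = fun y => eval y (derivative p) := by
      funext z; exact p.deriv
    rw [h, ih, ← Function.iterate_succ_apply]

lemma legP_eq (n : ℕ) (x : ℝ) :
    legP n x = (1 / (2 ^ n * n.factorial)) * eval x (derivative^[n] (legQ n)) := by
  unfold legP
  have h : (fun y : ℝ => (y ^ 2 - 1) ^ n) = fun y => eval y (legQ n) := by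
    funext z; simp [legQ]
  rw [h, eval_iter]

lemma evalG_neg_one (n : ℕ) : eval (-1 : ℝ) (legG n) = 0 := by
  have h : ((X + 1 : ℝ[X])) ^ (n + 1) ∣ legQ (n + 1) := by
    unfold legQ
    have e : (X ^ 2 - 1 : ℝ[X]) = (X + 1) * (X - 1) := by ring
    rw [e, mul_pow]
    exact Dvd.intro _ rfl
  have h2 := Polynomial.pow_sub_dvd_iterate_derivative_of_pow_dvd n h
  rw [show n + 1 - n = 1 by omega, pow_one] at h2
  obtain ⟨r, hr⟩ := h2
  unfold legG
  rw [hr]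
  simp

lemma legIR_eq (n : ℕ) (x : ℝ) :
    legIR (n + 1) x = (1 / (2 ^ (n + 1) * (n + 1).factorial)) * eval x (legG n) := by
  unfold legIR
  have hP : ∀ z : ℝ, legP (n + 1) z
      = (1 / (2 ^ (n + 1) * (n + 1).factorial)) * eval z (derivative (legG n)) := by
    intro z
    rw [legP_eq]
    congr 2
    exact Function.iterate_succ_apply' _ _ _
  simp_rw [hP]
  rw [intervalIntegral.integral_const_mul]
  have hFTC : (∫ z in (-1 : ℝ)..x, eval z (derivative (legG n)))
      = eval x (legG n) - eval (-1 : ℝ) (legG n) := by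
    apply intervalIntegral.integral_deriv_eq_sub' (fun t => eval t (legG n))
    · funext z; exact (legG n).deriv
    · intro z _; exact (legG n).differentiableAt
    · exact (Polynomial.continuous _).continuousOn
  rw [hFTC, evalG_neg_one, sub_zero]

lemma legG_one : legG 1 = 4 * (X * legG 0) := by
  simp only [legG, legQ]
  simp [derivative_pow, derivative_mul, map_ofNat]
  ring

lemma recI (n : ℕ) (x : ℝ) :
    (2 * ((n : ℝ) + 1) + 1) * x * legIR (n + 1) x
      = ((n : ℝ) + 3) * legIR (n + 2) x + (n : ℝ) * legIR n x := by
  cases n with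
  | zero =>
    have h : eval x (legG 1) = 4 * (x * eval x (legG 0)) := by
      rw [legG_one]; simp
    rw [legIR_eq 1, legIR_eq 0, h]
    norm_num [Nat.factorial]
    ring
  | succ m =>
    have h := congrArg (eval x) (RecP m)
    simp only [eval_mul, eval_add, eval_X, eval_natCast, eval_ofNat, eval_pow, eval_sub,
      eval_one] at h
    have e1 : eval x (legG m) = 2 ^ (m + 1) * ((m + 1).factorial : ℝ) * legIR (m + 1) x := by
      rw [legIR_eq]
      field_simp
    have e2 : eval x (legG (m + 1)) = 2 ^ (m + 2) * ((m + 2).factorial : ℝ) * legIR (m + 2) x := by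
      rw [legIR_eq]
      have : (m + 1) + 1 = m + 2 := rfl
      field_simp
    have e3 : eval x (legG (m + 2)) = 2 ^ (m + 3) * ((m + 3).factorial : ℝ) * legIR (m + 3) x := by
      rw [show m + 3 = (m + 2) + 1 from rfl, legIR_eq]
      field_simp
    rw [e1, e2, e3] at h
    have hc : (2 : ℝ) ^ (m + 3) * ((m : ℝ) + 1) * ((m : ℝ) + 2) * ((m : ℝ) + 3)
        * (m.factorial : ℝ) ≠ 0 := by positivity
    refine mul_left_cancel₀ hc ?_
    push_cast [Nat.factorial_succ] at h ⊢
    linear_combination h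

lemma keyI (n : ℕ) (x y : ℝ) :
    (x - y) * ((2 * ((n : ℝ) + 1) + 1) * legIR (n + 1) x * legIR (n + 1) y)
      = ((n : ℝ) + 3) * legDR (n + 1) x y - (n : ℝ) * legDR n x y := by
  have hx := recI n x
  have hy := recI n y
  unfold legDR
  linear_combination legIR (n + 1) y * hx - legIR (n + 1) x * hy

theorem statement_17 (x y : ℝ) (hx : x ∈ Set.Icc (-1 : ℝ) 1) (hy : y ∈ Set.Icc (-1 : ℝ) 1)
    (N : ℕ) (hN : 1 ≤ N) :
    (x - y) * ∑ n ∈ Finset.Icc 1 N, (2 * (n : ℝ) + 1) * legIR n x * legIR n y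
      = (N : ℝ) * legDR N x y + 2 * ∑ n ∈ Finset.Icc 1 N, legDR n x y := by
  induction N, hN using Nat.le_induction with
  | base =>
    have h := keyI 0 x y
    simp only [Finset.Icc_self, Finset.sum_singleton]
    push_cast at h ⊢
    linear_combination h
  | succ N hN ih =>
    rw [Finset.sum_Icc_succ_top (by omega : 1 ≤ N + 1),
      Finset.sum_Icc_succ_top (by omega : 1 ≤ N + 1)]
    have h := keyI N x y
    push_cast at h ih ⊢
    linear_combination ih + h
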